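/- Let G be a locally compact Hausdorff topological group with a left Haar measure μ, and let K be a compact open subgroup of G. Let π be a continuous representation of G on a complex Banach space V, i.e., a group homomorphism from G to the continuous linear automorphisms of V such that the map (g,v) ↦ π(g)v is continuous. Then for every g ∈ G and every v ∈ V, one has μ(KgK) · ∫_K ∫_K π(k₁ g k₂) v dμ(k₂) dμ(k₁) = μ(K)² · ∫_{KgK} π(h) v dμ(h), where the integrals are Bochner integrals (all integrals exist, and 0 < μ(K) ≤ μ(KgK) < ∞ since K and KgK are compact and open). -/

import Mathlib

open MeasureTheory
open Pointwise

/-- The double coset `KgK` of `g` with respect to a subgroup `K`. -/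
def doubleCoset {G : Type*} [Group G] (K : Subgroup G) (g : G) : Set G :=
  {x : G | ∃ k₁ ∈ K, ∃ k₂ ∈ K, x = k₁ * g * k₂}

/-- Let `G` be a locally compact Hausdorff topological group with a left Haar measure `μ`,
`K` a compact open subgroup, and `π` a continuous representation of `G` on a complex Banach
space `V`.  Then for all `g ∈ G` and `v ∈ V`:
`μ(KgK) • ∫_K ∫_K π(k₁ g k₂) v = μ(K)² • ∫_{KgK} π(h) v`,
all integrals being Bochner integrals (they all exist, and
`0 < μ(K) ≤ μ(KgK) < ∞` since `K` and `KgK` are compact and open). -/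
theorem stmt_0 {G : Type*} [Group G] [TopologicalSpace G] [IsTopologicalGroup G]
    [LocallyCompactSpace G] [T2Space G] [MeasurableSpace G] [BorelSpace G]
    (μ : Measure G) [μ.IsHaarMeasure] [μ.Regular]
    {V : Type*} [NormedAddCommGroup V] [NormedSpace ℂ V] [NormedSpace ℝ V]
    [IsScalarTower ℝ ℂ V] [CompleteSpace V]
    (K : Subgroup G) (hKcompact : IsCompact (K : Set G)) (hKopen : IsOpen (K : Set G))
    (π : G →* (V ≃L[ℂ] V)) (hπcont : Continuous fun p : G × V => π p.1 p.2)
    (g : G) (v : V) :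
    0 < μ (K : Set G) ∧
    μ (K : Set G) ≤ μ (doubleCoset K g) ∧
    μ (doubleCoset K g) < ⊤ ∧
    IntegrableOn (fun h : G => π h v) (doubleCoset K g) μ ∧
    (∀ k₁ : G, IntegrableOn (fun k₂ : G => π (k₁ * g * k₂) v) (K : Set G) μ) ∧
    IntegrableOn (fun k₁ : G => ∫ k₂ in (K : Set G), π (k₁ * g * k₂) v ∂μ) (K : Set G) μ ∧
    (μ (doubleCoset K g)).toReal •
        (∫ k₁ in (K : Set G), ∫ k₂ in (K : Set G), π (k₁ * g * k₂) v ∂μ ∂μ)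
      = ((μ (K : Set G)).toReal) ^ 2 • (∫ h in doubleCoset K g, π h v ∂μ) := by
  have hKmeas : MeasurableSet (K : Set G) := hKopen.measurableSet
  set f : G → V := fun h => π h v with hf_def
  have hf : Continuous f := hπcont.comp (continuous_id.prodMk continuous_const)
  set S : Set G := doubleCoset K g with hS_def
  -- S as a pointwise product
  have hSmul : S = (K : Set G) * ({g} : Set G) * (K : Set G) := by
    ext x
    constructor
    · rintro ⟨k₁, h1, k₂, h2, rfl⟩
      exact ⟨k₁ * g, ⟨k₁, h1, g, rfl, rfl⟩, k₂, h2, rfl⟩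
    · rintro ⟨y, ⟨k₁, h1, g', hg', rfl⟩, k₂, h2, rfl⟩
      rcases hg' with rfl
      exact ⟨k₁, h1, k₂, h2, rfl⟩
  have hSopen : IsOpen S := by
    rw [hSmul]; exact hKopen.mul_left
  have hSmeas : MeasurableSet S := hSopen.measurableSet
  have hScompact : IsCompact S := by
    rw [hSmul]; exact (hKcompact.mul isCompact_singleton).mul hKcompact
  -- slices
  set C : G → Set G := fun k => {h : G | g⁻¹ * (k⁻¹ * h) ∈ (K : Set G)} with hC_def
  set D : G → Set G := fun h => {k : G | g⁻¹ * (k⁻¹ * h) ∈ (K : Set G)} with hD_def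
  set U : Set (G × G) := {p : G × G | g⁻¹ * (p.1⁻¹ * p.2) ∈ (K : Set G)} with hU_def
  have hCopen : ∀ k : G, IsOpen (C k) := by
    intro k
    have : C k = (fun h : G => g⁻¹ * (k⁻¹ * h)) ⁻¹' (K : Set G) := rfl
    rw [this]
    exact hKopen.preimage (continuous_const.mul (continuous_const.mul continuous_id))
  have hDopen : ∀ h : G, IsOpen (D h) := by
    intro h
    have : D h = (fun k : G => g⁻¹ * (k⁻¹ * h)) ⁻¹' (K : Set G) := rfl
    rw [this]
    exact hKopen.preimage (continuous_const.mul ((continuous_id.inv).mul continuous_const))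
  -- C k as an image / preimage
  have hC_image : ∀ k : G, C k = (fun x => k * g * x) '' (K : Set G) := by
    intro k
    ext h
    constructor
    · intro hh
      exact ⟨g⁻¹ * (k⁻¹ * h), hh, by group⟩
    · rintro ⟨x, hx, rfl⟩
      show g⁻¹ * (k⁻¹ * (k * g * x)) ∈ (K : Set G)
      have : g⁻¹ * (k⁻¹ * (k * g * x)) = x := by group
      rw [this]; exact hx
  have hC_pre : ∀ k : G, C k = (fun h => (k * g)⁻¹ * h) ⁻¹' (K : Set G) := by
    intro k
    ext h
    show g⁻¹ * (k⁻¹ * h) ∈ (K : Set G) ↔ (k * g)⁻¹ * h ∈ (K : Set G)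
    rw [mul_inv_rev, mul_assoc]
  have hCmeasure : ∀ k : G, μ (C k) = μ (K : Set G) := by
    intro k
    rw [hC_pre k]
    exact measure_preimage_mul μ (k * g)⁻¹ _
  have hCsubS : ∀ k ∈ (K : Set G), C k ⊆ S := by
    intro k hk h hh
    exact ⟨k, hk, g⁻¹ * (k⁻¹ * h), hh, by group⟩
  -- the subgroup-like set T = K ∩ gKg⁻¹
  set T : Set G := (K : Set G) ∩ D g with hT_def
  have hTopen : IsOpen T := hKopen.inter (hDopen g)
  have hT1 : (1 : G) ∈ T := by
    refine ⟨K.one_mem, ?_⟩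
    show g⁻¹ * ((1 : G)⁻¹ * g) ∈ (K : Set G)
    have : g⁻¹ * ((1 : G)⁻¹ * g) = 1 := by group
    rw [this]; exact K.one_mem
  have hDcapS : ∀ h ∈ S, μ ((K : Set G) ∩ D h) = μ T := by
    rintro h ⟨a, ha, b, hb, rfl⟩
    have key : (K : Set G) ∩ D (a * g * b) = (fun x => a * x) '' T := by
      ext k
      constructor
      · rintro ⟨hkK, hkD⟩
        refine ⟨a⁻¹ * k, ⟨K.mul_mem (K.inv_mem ha) hkK, ?_⟩, by group⟩
        show g⁻¹ * ((a⁻¹ * k)⁻¹ * g) ∈ (K : Set G)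
        have heq : g⁻¹ * ((a⁻¹ * k)⁻¹ * g) = (g⁻¹ * (k⁻¹ * (a * g * b))) * b⁻¹ := by group
        rw [heq]
        exact K.mul_mem hkD (K.inv_mem hb)
      · rintro ⟨m, ⟨hmK, hmD⟩, rfl⟩
        refine ⟨K.mul_mem ha hmK, ?_⟩
        show g⁻¹ * ((a * m)⁻¹ * (a * g * b)) ∈ (K : Set G)
        have heq : g⁻¹ * ((a * m)⁻¹ * (a * g * b)) = (g⁻¹ * (m⁻¹ * g)) * b := by group
        rw [heq]
        exact K.mul_mem hmD hb
    rw [key, Set.image_mul_left, measure_preimage_mul]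
  -- the key invariance of U under right multiplication by T in the first variable
  have hTiff : ∀ (k x h : G), x ∈ T → ((k * x, h) ∈ U ↔ (k, h) ∈ U) := by
    rintro k x h ⟨hxK, hxD⟩
    have hy : g⁻¹ * (x⁻¹ * g) ∈ (K : Set G) := hxD
    show g⁻¹ * ((k * x)⁻¹ * h) ∈ (K : Set G) ↔ g⁻¹ * (k⁻¹ * h) ∈ (K : Set G)
    have hrw : g⁻¹ * ((k * x)⁻¹ * h) = (g⁻¹ * (x⁻¹ * g)) * (g⁻¹ * (k⁻¹ * h)) := by group
    rw [hrw]
    constructor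
    · intro hmem
      have hmem' := K.mul_mem (K.inv_mem hy) hmem
      have heq : (g⁻¹ * (x⁻¹ * g))⁻¹ * ((g⁻¹ * (x⁻¹ * g)) * (g⁻¹ * (k⁻¹ * h)))
          = g⁻¹ * (k⁻¹ * h) := by group
      rwa [heq] at hmem'
    · exact fun hmem => K.mul_mem hy hmem
  -- a finite subcover of K by translates of T
  have hWopen : ∀ k : G, IsOpen ((fun x => k * x) '' T) := by
    intro k
    rw [Set.image_mul_left]
    exact hTopen.preimage (continuous_const.mul continuous_id)
  have hcovK : (K : Set G) ⊆ ⋃ k : G, (fun x => k * x) '' T := by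
    intro a _
    exact Set.mem_iUnion.2 ⟨a, 1, hT1, mul_one a⟩
  obtain ⟨t, ht⟩ := hKcompact.elim_finite_subcover (fun k : G => (fun x => k * x) '' T)
    hWopen hcovK
  -- the measurable version of the kernel set
  set U' : Set (G × G) :=
    ⋃ k ∈ t, (((fun x => k * x) '' T ∩ (K : Set G)) ×ˢ (C k ∩ S)) with hU'_def
  have hU'meas : MeasurableSet U' :=
    t.measurableSet_biUnion fun k _ =>
      (((hWopen k).measurableSet.inter hKmeas).prod ((hCopen k).measurableSet.inter hSmeas))
  have hU'eq : U' = U ∩ ((K : Set G) ×ˢ S) := by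
    apply Set.Subset.antisymm
    · rintro ⟨a, h⟩ hmem
      rw [hU'_def, Set.mem_iUnion₂] at hmem
      obtain ⟨k, hkt, ⟨haW, haK⟩, hhC, hhS⟩ := hmem
      obtain ⟨x, hxT, rfl⟩ := haW
      exact ⟨(hTiff k x h hxT).2 hhC, haK, hhS⟩
    · rintro ⟨a, h⟩ ⟨haU, haK, hhS⟩
      have hcov := ht haK
      rw [Set.mem_iUnion₂] at hcov
      obtain ⟨k, hkt, hkW⟩ := hcov
      obtain ⟨x, hxT, rfl⟩ := hkW
      rw [hU'_def, Set.mem_iUnion₂]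
      exact ⟨k, hkt, ⟨⟨x, hxT, rfl⟩, haK⟩, (hTiff k x h hxT).1 haU, hhS⟩
  have hU'fst : ∀ k ∈ (K : Set G), Prod.mk k ⁻¹' U' = C k := by
    intro k hk
    ext h
    rw [Set.mem_preimage, hU'eq]
    constructor
    · rintro ⟨hU, _⟩
      exact hU
    · intro hC
      exact ⟨hC, hk, hCsubS k hk hC⟩
  have hU'snd : ∀ h ∈ S, (fun k => (k, h)) ⁻¹' U' = (K : Set G) ∩ D h := by
    intro h hh
    ext k
    rw [Set.mem_preimage, hU'eq]
    constructor
    · rintro ⟨hU, hk, _⟩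
      exact ⟨hk, hU⟩
    · rintro ⟨hk, hD⟩
      exact ⟨hD, hk, hh⟩
  have hU'S : ∀ p : G × G, p ∈ U' → p.2 ∈ S := by
    intro p hp
    rw [hU'eq] at hp
    exact hp.2.2
  have hDempty : ∀ h : G, h ∉ S → (K : Set G) ∩ D h = ∅ := by
    intro h hh
    rw [Set.eq_empty_iff_forall_notMem]
    rintro k ⟨hkK, hkD⟩
    exact hh ⟨k, hkK, g⁻¹ * (k⁻¹ * h), hkD, by group⟩
  -- basic measure facts
  have h1 : 0 < μ (K : Set G) := hKopen.measure_pos μ ⟨1, K.one_mem⟩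
  have hKlt : μ (K : Set G) < ⊤ := hKcompact.measure_lt_top
  have h3 : μ S < ⊤ := hScompact.measure_lt_top
  have h2 : μ (K : Set G) ≤ μ S := by
    have hsub : ((g * ·) '' (K : Set G)) ⊆ S := by
      rintro _ ⟨x, hx, rfl⟩
      exact ⟨1, K.one_mem, x, hx, by group⟩
    calc μ (K : Set G) = μ ((g * ·) '' (K : Set G)) := by
          rw [Set.image_mul_left, measure_preimage_mul]
      _ ≤ μ S := measure_mono hsub
  -- integrabilities
  have h4 : IntegrableOn f S μ := hf.continuousOn.integrableOn_compact hScompact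
  have h5 : ∀ k₁ : G, IntegrableOn (fun k₂ : G => f (k₁ * g * k₂)) (K : Set G) μ := by
    intro k₁
    exact (hf.comp (continuous_const.mul continuous_id)).continuousOn.integrableOn_compact
      hKcompact
  -- the iterated inner integral, as a continuous function of k₁
  set w : V := ∫ k₂ in (K : Set G), f (g * k₂) ∂μ with hw_def
  have hgw : IntegrableOn (fun k₂ : G => f (g * k₂)) (K : Set G) μ :=
    (hf.comp (continuous_const.mul continuous_id)).continuousOn.integrableOn_compact hKcompact
  have hw : ∀ k₁ : G, (∫ k₂ in (K : Set G), f (k₁ * g * k₂) ∂μ) = π k₁ w := by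
    intro k₁
    have heq : ∀ k₂ : G, f (k₁ * g * k₂) = (π k₁ : V →L[ℂ] V) (f (g * k₂)) := by
      intro k₂
      show π (k₁ * g * k₂) v = π k₁ (π (g * k₂) v)
      have : k₁ * g * k₂ = k₁ * (g * k₂) := by rw [mul_assoc]
      rw [this, map_mul]
      rfl
    calc (∫ k₂ in (K : Set G), f (k₁ * g * k₂) ∂μ)
        = ∫ k₂ in (K : Set G), (π k₁ : V →L[ℂ] V) (f (g * k₂)) ∂μ :=
          integral_congr_ae (Filter.Eventually.of_forall fun k₂ => heq k₂)
      _ = (π k₁ : V →L[ℂ] V) w := ContinuousLinearMap.integral_comp_comm _ hgw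
      _ = π k₁ w := rfl
  have h6 : IntegrableOn (fun k₁ : G => ∫ k₂ in (K : Set G), f (k₁ * g * k₂) ∂μ)
      (K : Set G) μ := by
    have hcont : Continuous (fun k₁ : G => π k₁ w) :=
      hπcont.comp (continuous_id.prodMk continuous_const)
    have heq : (fun k₁ : G => ∫ k₂ in (K : Set G), f (k₁ * g * k₂) ∂μ)
        = fun k₁ : G => π k₁ w := funext hw
    rw [heq]
    exact hcont.continuousOn.integrableOn_compact hKcompact
  -- the two restricted measures
  set κ : Measure G := μ.restrict (K : Set G) with hκ_def
  set ν : Measure G := μ.restrict S with hν_def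
  haveI hfinκ : IsFiniteMeasure κ := ⟨by rw [hκ_def, Measure.restrict_apply_univ]; exact hKlt⟩
  haveI hfinν : IsFiniteMeasure ν := ⟨by rw [hν_def, Measure.restrict_apply_univ]; exact h3⟩
  -- the kernel function
  set φ : G → G → V := fun k h => U'.indicator (fun p : G × G => f p.2) (k, h) with hφ_def
  have hφ_uncurry : Function.uncurry φ = U'.indicator (fun p : G × G => f p.2) := by
    funext p
    rw [hφ_def]
    rfl
  have hslice1 : ∀ k h : G, φ k h = (Prod.mk k ⁻¹' U').indicator f h := by
    intro k h
    by_cases hm : (k, h) ∈ U'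
    · rw [hφ_def]
      simp only [Set.indicator_of_mem hm,
        Set.indicator_of_mem (Set.mem_preimage.2 hm : h ∈ Prod.mk k ⁻¹' U')]
    · have hm1 : h ∉ Prod.mk k ⁻¹' U' := fun hc => hm (Set.mem_preimage.1 hc)
      rw [hφ_def]
      simp only [Set.indicator_of_notMem hm, Set.indicator_of_notMem hm1]
  have hslice2 : ∀ k h : G, φ k h = ((fun k' => (k', h)) ⁻¹' U').indicator (fun _ => f h) k := by
    intro k h
    by_cases hm : (k, h) ∈ U'
    · rw [hφ_def]
      simp only [Set.indicator_of_mem hm,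
        Set.indicator_of_mem (Set.mem_preimage.2 hm : k ∈ (fun k' => (k', h)) ⁻¹' U')]
    · have hm1 : k ∉ (fun k' => (k', h)) ⁻¹' U' := fun hc => hm (Set.mem_preimage.1 hc)
      rw [hφ_def]
      simp only [Set.indicator_of_notMem hm, Set.indicator_of_notMem hm1]
  -- integrability of the kernel on the product
  obtain ⟨Cb, hCb⟩ := hScompact.exists_bound_of_continuousOn hf.continuousOn
  have haesm : AEStronglyMeasurable (Function.uncurry φ) (κ.prod ν) := by
    rw [hφ_uncurry]
    have hsndqmp : Measure.QuasiMeasurePreserving (Prod.snd : G × G → G) (κ.prod ν) ν := by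
      refine ⟨measurable_snd, ?_⟩
      rw [Measure.map_snd_prod]
      exact Measure.smul_absolutelyContinuous
    have hfν : AEStronglyMeasurable f ν := by
      rw [hν_def]
      exact hf.continuousOn.aestronglyMeasurable_of_isCompact hScompact hSmeas
    have : AEStronglyMeasurable (fun p : G × G => f p.2) (κ.prod ν) :=
      hfν.comp_quasiMeasurePreserving hsndqmp
    exact this.indicator hU'meas
  have hφint : Integrable (Function.uncurry φ) (κ.prod ν) := by
    refine Integrable.mono' (integrable_const (max Cb 0)) haesm ?_
    refine Filter.Eventually.of_forall fun p => ?_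
    rw [hφ_uncurry]
    by_cases hpU : p ∈ U'
    · rw [Set.indicator_of_mem hpU]
      exact le_max_of_le_left (hCb p.2 (hU'S p hpU))
    · rw [Set.indicator_of_notMem hpU]
      simp
  -- translation identity for integrals over C k
  have hint_trans : ∀ k : G, (∫ h in C k, f h ∂μ) = ∫ x in (K : Set G), f (k * g * x) ∂μ := by
    intro k
    rw [hC_image k]
    exact (measurePreserving_mul_left μ (k * g)).setIntegral_image_emb
      (Homeomorph.mulLeft (k * g)).measurableEmbedding f (K : Set G)
  -- Step 1: the double integral equals the iterated kernel integral
  have step1 : (∫ k₁ in (K : Set G), ∫ k₂ in (K : Set G), f (k₁ * g * k₂) ∂μ ∂μ)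
      = ∫ k, ∫ h, φ k h ∂ν ∂κ := by
    rw [hκ_def]
    refine integral_congr_ae ?_
    filter_upwards [ae_restrict_mem hKmeas] with k hk
    have hinner : (∫ h, φ k h ∂ν) = ∫ h in S, (C k).indicator f h ∂μ := by
      rw [hν_def]
      refine integral_congr_ae (Filter.Eventually.of_forall fun h => ?_)
      show φ k h = (C k).indicator f h
      rw [hslice1 k h, hU'fst k hk]
    rw [hinner, setIntegral_indicator (hCopen k).measurableSet,
      Set.inter_eq_self_of_subset_right (hCsubS k hk), hint_trans k]
  -- Step 2: Fubini
  have step2 : (∫ k, ∫ h, φ k h ∂ν ∂κ) = ∫ h, ∫ k, φ k h ∂κ ∂ν :=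
    integral_integral_swap hφint
  -- Step 3: compute the swapped iterated integral
  have step3 : (∫ h, ∫ k, φ k h ∂κ ∂ν) = (μ T).toReal • ∫ h in S, f h ∂μ := by
    have heq : ∀ h ∈ S, (∫ k, φ k h ∂κ) = (μ T).toReal • f h := by
      intro h hh
      have hinner : (∫ k, φ k h ∂κ)
          = ∫ k in (K : Set G), ((K : Set G) ∩ D h).indicator (fun _ => f h) k ∂μ := by
        rw [hκ_def]
        refine integral_congr_ae (Filter.Eventually.of_forall fun k => ?_)
        show φ k h = ((K : Set G) ∩ D h).indicator (fun _ => f h) k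
        rw [hslice2 k h, hU'snd h hh]
      rw [hinner, setIntegral_indicator (hKmeas.inter (hDopen h).measurableSet),
        Set.inter_eq_self_of_subset_right Set.inter_subset_left, setIntegral_const,
        Measure.real, hDcapS h hh]
    calc (∫ h, ∫ k, φ k h ∂κ ∂ν) = ∫ h in S, (μ T).toReal • f h ∂μ := by
          rw [hν_def]
          refine integral_congr_ae ?_
          filter_upwards [ae_restrict_mem hSmeas] with h hh
          exact heq h hh
      _ = (μ T).toReal • ∫ h in S, f h ∂μ := integral_smul _ _
  -- Step 4: the measure identity  μ(K) * μ(K) = μ(T) * μ(S)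
  have step4 : μ (K : Set G) * μ (K : Set G) = μ T * μ S := by
    have hA : (κ.prod ν) U' = μ (K : Set G) * μ (K : Set G) := by
      rw [Measure.prod_apply hU'meas]
      have hcongr : ∀ᵐ k ∂κ, ν (Prod.mk k ⁻¹' U') = μ (K : Set G) := by
        filter_upwards [ae_restrict_mem hKmeas] with k hk
        rw [hU'fst k hk, hν_def, Measure.restrict_apply (hCopen k).measurableSet,
          Set.inter_eq_self_of_subset_left (hCsubS k hk), hCmeasure k]
      rw [lintegral_congr_ae hcongr, lintegral_const, hκ_def, Measure.restrict_apply_univ]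
    have hB : (κ.prod ν) U' = μ T * μ S := by
      rw [Measure.prod_apply_symm hU'meas]
      have hcongr : ∀ᵐ h ∂ν, κ ((fun k => (k, h)) ⁻¹' U') = μ T := by
        filter_upwards [ae_restrict_mem hSmeas] with h hh
        rw [hU'snd h hh, hκ_def, Measure.restrict_apply (hKmeas.inter (hDopen h).measurableSet),
          Set.inter_eq_self_of_subset_left Set.inter_subset_left, hDcapS h hh]
      rw [lintegral_congr_ae hcongr, lintegral_const, hν_def, Measure.restrict_apply_univ]
    rw [← hA, hB]
  -- assemble everything
  refine ⟨h1, h2, h3, h4, h5, h6, ?_⟩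
  have hDint : (∫ k₁ in (K : Set G), ∫ k₂ in (K : Set G), f (k₁ * g * k₂) ∂μ ∂μ)
      = (μ T).toReal • ∫ h in S, f h ∂μ := by
    rw [step1, step2, step3]
  show (μ S).toReal • (∫ k₁ in (K : Set G), ∫ k₂ in (K : Set G), f (k₁ * g * k₂) ∂μ ∂μ)
      = ((μ (K : Set G)).toReal) ^ 2 • (∫ h in S, f h ∂μ)
  rw [hDint, smul_smul, ← ENNReal.toReal_mul, mul_comm (μ S) (μ T), ← step4,
    ENNReal.toReal_mul, ← pow_two]
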